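/- For every t ≥ 0 the random variable Λ_{t∧τ} is integrable, and the process M_t := 1_{{τ ≤ t}} − Λ_{t∧τ}, t ≥ 0, is a martingale with respect to the enlarged filtration (ℱ_t)_{t≥0}. -/

import Mathlib

open MeasureTheory Filter
open scoped ENNReal Topology

lemma lemA {Ω : Type*} {G m0 : MeasurableSpace Ω} (μ : Measure Ω) [IsProbabilityMeasure μ]
    (hG : G ≤ m0) {X E : Ω → ℝ} {S : Set Ω}
    (hX : Measurable[G] X) (hXnn : ∀ ω, 0 ≤ X ω)
    (hSm : MeasurableSet[m0] S)
    (hE : Measurable[m0] E) (hEnn : ∀ ω, 0 ≤ E ω) (hE1 : ∀ ω, E ω ≤ 1)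
    (hcond : μ[S.indicator (fun _ => (1:ℝ)) | G] =ᵐ[μ] E) :
    ∫⁻ ω, ENNReal.ofReal (X ω * S.indicator (fun _ => (1:ℝ)) ω) ∂μ
      = ∫⁻ ω, ENNReal.ofReal (X ω * E ω) ∂μ := by
  haveI : SigmaFinite (μ.trim hG) := inferInstance
  have hXm0 : Measurable[m0] X := hX.mono hG le_rfl
  have hindm : Measurable[m0] (S.indicator (fun _ => (1:ℝ))) :=
    measurable_const.indicator hSm
  have hindnn : ∀ ω, 0 ≤ S.indicator (fun _ => (1:ℝ)) ω :=
    fun ω => Set.indicator_nonneg (fun _ _ => zero_le_one) ω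
  have hind1 : ∀ ω, S.indicator (fun _ => (1:ℝ)) ω ≤ 1 := fun ω => by
    classical
    simp only [Set.indicator_apply]
    split_ifs <;> norm_num
  have hind : Integrable (S.indicator (fun _ => (1:ℝ))) μ := (integrable_const 1).indicator hSm
  have hminnn : ∀ m : ℕ, ∀ ω, 0 ≤ min (X ω) m := fun m ω => le_min (hXnn ω) (Nat.cast_nonneg m)
  have hfgint : ∀ m : ℕ, Integrable (fun ω => min (X ω) m * S.indicator (fun _ => (1:ℝ)) ω) μ := by
    intro m
    refine Integrable.mono' (integrable_const (m:ℝ))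
      ((hXm0.min measurable_const).mul hindm).aestronglyMeasurable (ae_of_all _ fun ω => ?_)
    rw [Real.norm_eq_abs, abs_of_nonneg (mul_nonneg (hminnn m ω) (hindnn ω))]
    have : min (X ω) m * S.indicator (fun _ => (1:ℝ)) ω ≤ (m:ℝ) * 1 :=
      mul_le_mul (min_le_right _ _) (hind1 ω) (hindnn ω) (Nat.cast_nonneg m)
    linarith
  have hfEint : ∀ m : ℕ, Integrable (fun ω => min (X ω) m * E ω) μ := by
    intro m
    refine Integrable.mono' (integrable_const (m:ℝ))
      ((hXm0.min measurable_const).mul hE).aestronglyMeasurable (ae_of_all _ fun ω => ?_)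
    rw [Real.norm_eq_abs, abs_of_nonneg (mul_nonneg (hminnn m ω) (hEnn ω))]
    have : min (X ω) m * E ω ≤ (m:ℝ) * 1 :=
      mul_le_mul (min_le_right _ _) (hE1 ω) (hEnn ω) (Nat.cast_nonneg m)
    linarith
  have key : ∀ m : ℕ, ∫ ω, min (X ω) m * S.indicator (fun _ => (1:ℝ)) ω ∂μ
      = ∫ ω, min (X ω) m * E ω ∂μ := by
    intro m
    have hfG : StronglyMeasurable[G] (fun ω => min (X ω) m) :=
      (hX.min measurable_const).stronglyMeasurable
    have hbdd : ∀ᵐ ω ∂μ, ‖min (X ω) m‖ ≤ (m:ℝ) := ae_of_all _ fun ω => by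
      rw [Real.norm_eq_abs, abs_of_nonneg (hminnn m ω)]; exact min_le_right _ _
    have hpull := condExp_stronglyMeasurable_mul_of_bound hG hfG hind (m:ℝ) hbdd
    have e2 : ∫ ω, (μ[(fun ω => min (X ω) m) * S.indicator (fun _ => (1:ℝ)) | G]) ω ∂μ
        = ∫ ω, min (X ω) m * S.indicator (fun _ => (1:ℝ)) ω ∂μ :=
      integral_condExp hG
    rw [← e2, integral_congr_ae hpull]
    refine integral_congr_ae ?_
    filter_upwards [hcond] with ω hω
    simp only [Pi.mul_apply, hω]
  -- now take limits
  have hmono : ∀ ω, Monotone fun m : ℕ => min (X ω) m := fun ω a b hab =>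
    min_le_min le_rfl (Nat.cast_le.2 hab)
  have htend : ∀ ω, Tendsto (fun m : ℕ => min (X ω) m) atTop (𝓝 (X ω)) := by
    intro ω
    refine tendsto_atTop_of_eventually_const (i₀ := ⌈X ω⌉₊) fun i hi => ?_
    exact min_eq_left ((Nat.le_ceil (X ω)).trans (Nat.cast_le.2 hi))
  have h1 : Tendsto (fun m : ℕ => ∫⁻ ω, ENNReal.ofReal (min (X ω) m * S.indicator (fun _ => (1:ℝ)) ω) ∂μ)
      atTop (𝓝 (∫⁻ ω, ENNReal.ofReal (X ω * S.indicator (fun _ => (1:ℝ)) ω) ∂μ)) := by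
    refine lintegral_tendsto_of_tendsto_of_monotone
      (fun m => (((hXm0.min measurable_const).mul hindm).ennreal_ofReal).aemeasurable)
      (ae_of_all _ fun ω a b hab => ENNReal.ofReal_le_ofReal
        (mul_le_mul_of_nonneg_right (hmono ω hab) (hindnn ω)))
      (ae_of_all _ fun ω => (ENNReal.continuous_ofReal.tendsto _).comp
        (((htend ω).mul_const _)))
  have h2 : Tendsto (fun m : ℕ => ∫⁻ ω, ENNReal.ofReal (min (X ω) m * E ω) ∂μ)
      atTop (𝓝 (∫⁻ ω, ENNReal.ofReal (X ω * E ω) ∂μ)) := by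
    refine lintegral_tendsto_of_tendsto_of_monotone
      (fun m => (((hXm0.min measurable_const).mul hE).ennreal_ofReal).aemeasurable)
      (ae_of_all _ fun ω a b hab => ENNReal.ofReal_le_ofReal
        (mul_le_mul_of_nonneg_right (hmono ω hab) (hEnn ω)))
      (ae_of_all _ fun ω => (ENNReal.continuous_ofReal.tendsto _).comp
        (((htend ω).mul_const _)))
  have heq : ∀ m : ℕ, ∫⁻ ω, ENNReal.ofReal (min (X ω) m * S.indicator (fun _ => (1:ℝ)) ω) ∂μ
      = ∫⁻ ω, ENNReal.ofReal (min (X ω) m * E ω) ∂μ := by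
    intro m
    rw [← ofReal_integral_eq_lintegral_ofReal (hfgint m)
        (ae_of_all _ fun ω => mul_nonneg (hminnn m ω) (hindnn ω)),
      ← ofReal_integral_eq_lintegral_ofReal (hfEint m)
        (ae_of_all _ fun ω => mul_nonneg (hminnn m ω) (hEnn ω)),
      key m]
  simp only [heq] at h1
  exact tendsto_nhds_unique h1 h2

lemma meshSmall {c : ℝ} (_hc : 0 ≤ c) {d : ℝ} (hd : 0 < d) :
    ∃ N : ℕ, ∀ n : ℕ, N ≤ n → c / ((n : ℝ) + 1) ≤ d := by
  refine ⟨⌈c / d⌉₊, fun n hn => ?_⟩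
  have h1 : c / d ≤ (⌈c / d⌉₊ : ℝ) := Nat.le_ceil _
  have h2 : (⌈c / d⌉₊ : ℝ) ≤ n := Nat.cast_le.2 hn
  have h3 : c / d ≤ (n : ℝ) + 1 := by linarith
  have h4 : c ≤ ((n : ℝ) + 1) * d := by rwa [div_le_iff₀ hd] at h3
  rw [div_le_iff₀ (show (0:ℝ) < (n:ℝ) + 1 by positivity)]
  linarith [h4]

lemma lemC {Ω : Type*} {m' : MeasurableSpace Ω} (τ : Ω → ℝ) (hτnn : ∀ ω, 0 ≤ τ ω)
    (Λ : ℝ → Ω → ℝ) {t : ℝ} (ht : 0 ≤ t)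
    (hΛ0 : ∀ ω, Λ 0 ω = 0)
    (hmeas : ∀ u : ℝ, 0 ≤ u → u ≤ t → Measurable[m'] (Λ u))
    (hindm : ∀ r : ℝ, 0 ≤ r → r ≤ t → MeasurableSet[m'] {ω | r < τ ω})
    (hΛcont : ∀ ω, ContinuousOn (fun u => Λ u ω) (Set.Ici 0)) :
    StronglyMeasurable[m'] (fun ω => Λ (min t (τ ω)) ω) := by
  classical
  set J : ℝ → Ω → ℝ := fun r => Set.indicator {ω' | r < τ ω'} (fun _ => (1:ℝ)) with hJ
  set q : ℕ → ℕ → ℝ := fun n i => (i : ℝ) * (t / ((n : ℝ) + 1)) with hqdef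
  -- grid facts
  have hq0 : ∀ n, q n 0 = 0 := fun n => by simp [hqdef]
  have hqlast : ∀ n, q n (n + 1) = t := fun n => by
    have : ((n : ℝ) + 1) ≠ 0 := by positivity
    simp only [hqdef]
    push_cast
    field_simp
  have hqnn : ∀ n i, 0 ≤ q n i := fun n i => by
    have : (0:ℝ) ≤ t / ((n:ℝ)+1) := by positivity
    exact mul_nonneg (Nat.cast_nonneg i) this
  have hqmono : ∀ n, ∀ i j : ℕ, i ≤ j → q n i ≤ q n j := fun n i j hij => by
    have : (0:ℝ) ≤ t / ((n:ℝ)+1) := by positivity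
    exact mul_le_mul_of_nonneg_right (Nat.cast_le.2 hij) this
  have hqle : ∀ n, ∀ i : ℕ, i ≤ n + 1 → q n i ≤ t := fun n i hi => by
    have := hqmono n i (n+1) hi
    rwa [hqlast n] at this
  have hqstep : ∀ n i : ℕ, q n (i+1) - q n i = t / ((n:ℝ)+1) := fun n i => by
    simp only [hqdef]
    push_cast
    ring
  -- approximating functions
  set f : ℕ → Ω → ℝ := fun n ω =>
    (∑ i ∈ Finset.range (n+1), Λ (q n (i+1)) ω * (J (q n i) ω - J (q n (i+1)) ω))
      + Λ t ω * J t ω with hfdef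
  have hfm : ∀ n, Measurable[m'] (f n) := by
    intro n
    have hJm : ∀ r : ℝ, 0 ≤ r → r ≤ t → Measurable[m'] (J r) := fun r h0 h1 =>
      (measurable_const.indicator (hindm r h0 h1))
    refine Measurable.add ?_ ((hmeas t ht le_rfl).mul (hJm t ht le_rfl))
    refine Finset.measurable_sum _ fun i hi => ?_
    have hi' : i + 1 ≤ n + 1 := Nat.succ_le_succ (Nat.lt_succ_iff.1 (Finset.mem_range.1 hi))
    exact (hmeas _ (hqnn n (i+1)) (hqle n (i+1) hi')).mul
      ((measurable_const.indicator (hindm _ (hqnn n i) (hqle n i (le_trans (Nat.le_succ i) hi')))).sub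
        (measurable_const.indicator (hindm _ (hqnn n (i+1)) (hqle n (i+1) hi'))))
  -- pointwise convergence
  have hconv : ∀ ω, Tendsto (fun n => f n ω) atTop (𝓝 (Λ (min t (τ ω)) ω)) := by
    intro ω
    set A := Λ (min t (τ ω)) ω with hA
    -- uniform continuity
    have hc : ContinuousOn (fun u => Λ u ω) (Set.Icc 0 t) :=
      (hΛcont ω).mono Set.Icc_subset_Ici_self
    have hu := (isCompact_Icc.uniformContinuousOn_of_continuous hc)
    rw [Metric.uniformContinuousOn_iff_le] at hu
    rw [Metric.tendsto_atTop]
    intro ε hε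
    obtain ⟨δ', hδ', hud⟩ := hu (ε/2) (by positivity)
    obtain ⟨N, hN⟩ := meshSmall ht hδ'
    refine ⟨N, fun n hn => ?_⟩
    have hmesh : t / ((n:ℝ)+1) ≤ δ' := hN n hn
    -- indicator values
    have hJval : ∀ r, J r ω = if r < τ ω then 1 else 0 := fun r => by
      simp [hJ, Set.indicator_apply]
    have hJmono : ∀ i : ℕ, J (q n (i+1)) ω ≤ J (q n i) ω := by
      intro i
      rw [hJval, hJval]
      split_ifs with h1 h2 <;> norm_num
      · exact absurd (lt_of_le_of_lt (hqmono n i (i+1) (Nat.le_succ i)) h1) h2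
    have hJ01 : ∀ r, 0 ≤ J r ω ∧ J r ω ≤ 1 := fun r => by
      rw [hJval]; split_ifs <;> norm_num
    -- key algebraic identity
    have htel : ∑ i ∈ Finset.range (n+1), (J (q n i) ω - J (q n (i+1)) ω)
        = J (q n 0) ω - J (q n (n+1)) ω := Finset.sum_range_sub' (fun i => J (q n i) ω) (n+1)
    have hkey : f n ω - A
        = (∑ i ∈ Finset.range (n+1), (Λ (q n (i+1)) ω - A) * (J (q n i) ω - J (q n (i+1)) ω))
          + (Λ t ω - A) * J t ω + A * (J (q n 0) ω - 1) := by
      simp only [sub_mul, Finset.sum_sub_distrib, ← Finset.mul_sum, htel, hfdef, hqlast n]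
      ring
    -- second and third terms vanish
    have h2 : (Λ t ω - A) * J t ω = 0 := by
      rw [hJval]
      split_ifs with h
      · have : min t (τ ω) = t := min_eq_left (le_of_lt h)
        rw [hA, this]; ring
      · ring
    have h3 : A * (J (q n 0) ω - 1) = 0 := by
      rw [hq0 n, hJval]
      split_ifs with h
      · ring
      · have hτ0 : τ ω = 0 := le_antisymm (not_lt.1 h) (hτnn ω)
        have : min t (τ ω) = 0 := by rw [hτ0]; exact min_eq_right ht
        rw [hA, this, hΛ0 ω]; ring
    -- termwise bound
    have hterm : ∀ i ∈ Finset.range (n+1),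
        |(Λ (q n (i+1)) ω - A) * (J (q n i) ω - J (q n (i+1)) ω)|
          ≤ (ε/2) * (J (q n i) ω - J (q n (i+1)) ω) := by
      intro i hi
      have hi' : i + 1 ≤ n + 1 := Nat.succ_le_succ (Nat.lt_succ_iff.1 (Finset.mem_range.1 hi))
      rw [hJval, hJval]
      by_cases hA1 : q n i < τ ω
      · by_cases hA2 : q n (i+1) < τ ω
        · simp [hA1, hA2]
        · -- q n i < τ ω ≤ q n (i+1) : the active interval
          simp only [hA1, hA2, if_true, if_false]
          have hτle : τ ω ≤ q n (i+1) := not_lt.1 hA2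
          have hτt : τ ω ≤ t := hτle.trans (hqle n (i+1) hi')
          have hmin : min t (τ ω) = τ ω := min_eq_right hτt
          rw [hA, hmin]
          have hx : q n (i+1) ∈ Set.Icc (0:ℝ) t := ⟨hqnn n (i+1), hqle n (i+1) hi'⟩
          have hy : τ ω ∈ Set.Icc (0:ℝ) t := ⟨hτnn ω, hτt⟩
          have hd : dist (q n (i+1)) (τ ω) ≤ δ' := by
            rw [Real.dist_eq, abs_of_nonneg (by linarith)]
            have : q n (i+1) - τ ω ≤ q n (i+1) - q n i := by linarith
            rw [hqstep n i] at this
            linarith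
          have := hud _ hx _ hy hd
          rw [Real.dist_eq] at this
          calc |(Λ (q n (i+1)) ω - Λ (τ ω) ω) * (1 - 0)|
              = |Λ (q n (i+1)) ω - Λ (τ ω) ω| := by rw [mul_one_sub]; ring_nf
            _ ≤ ε/2 := this
            _ = ε/2 * (1 - 0) := by ring
      · have hA2 : ¬ q n (i+1) < τ ω := fun h =>
          hA1 (lt_of_le_of_lt (hqmono n i (i+1) (Nat.le_succ i)) h)
        simp [hA1, hA2]
    -- combine
    have hsum : |f n ω - A|
        ≤ ∑ i ∈ Finset.range (n+1), (ε/2) * (J (q n i) ω - J (q n (i+1)) ω) := by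
      rw [hkey, h2, h3, add_zero, add_zero]
      exact (Finset.abs_sum_le_sum_abs _ _).trans (Finset.sum_le_sum hterm)
    rw [← Finset.mul_sum, htel] at hsum
    have hb : (ε/2) * (J (q n 0) ω - J (q n (n+1)) ω) ≤ ε/2 := by
      have h01 := hJ01 (q n 0)
      have h02 := hJ01 (q n (n+1))
      nlinarith [hε]
    rw [Real.dist_eq]
    calc |f n ω - A| ≤ ε/2 := hsum.trans hb
      _ < ε := by linarith
  exact stronglyMeasurable_of_tendsto _
    (fun n => (hfm n).stronglyMeasurable) (tendsto_pi_nhds.2 hconv)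

lemma lemB {Ω : Type*} {m𝔉 : MeasurableSpace Ω} (μ : Measure Ω) [IsProbabilityMeasure μ]
    (𝔉 : MeasureTheory.Filtration ℝ m𝔉)
    (τ : Ω → ℝ) (hτmeas : Measurable τ) (hτnn : ∀ ω, 0 ≤ τ ω)
    (Λ : ℝ → Ω → ℝ)
    (hΛadapted : ∀ t : ℝ, 0 ≤ t → Measurable[𝔉 t] (Λ t))
    (hΛ0 : ∀ ω, Λ 0 ω = 0)
    (hΛnn : ∀ t : ℝ, 0 ≤ t → ∀ ω, 0 ≤ Λ t ω)
    (hΛmono : ∀ ω, MonotoneOn (fun t => Λ t ω) (Set.Ici 0))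
    (hΛcont : ∀ ω, ContinuousOn (fun t => Λ t ω) (Set.Ici 0))
    (hsurv : ∀ t : ℝ, 0 ≤ t →
      μ[Set.indicator {ω | t < τ ω} (fun _ => (1 : ℝ)) | 𝔉 t]
        =ᵐ[μ] fun ω => Real.exp (-Λ t ω))
    {s t : ℝ} (hs : 0 ≤ s) (hst : s ≤ t) :
    ∀ B : Set Ω, MeasurableSet[𝔉 s] B →
    ∫⁻ ω in B, ENNReal.ofReal (Λ (min t (τ ω)) ω - Λ (min s (τ ω)) ω) ∂μ
      = ∫⁻ ω in B, ENNReal.ofReal (Real.exp (-Λ s ω) - Real.exp (-Λ t ω)) ∂μ := by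
  classical
  have ht : 0 ≤ t := hs.trans hst
  have hΛm : ∀ u : ℝ, 0 ≤ u → Measurable (Λ u) := fun u hu =>
    (hΛadapted u hu).mono (𝔉.le u) le_rfl
  set J : ℝ → Ω → ℝ := fun r => Set.indicator {ω' | r < τ ω'} (fun _ => (1:ℝ)) with hJ
  have hJm : ∀ r : ℝ, Measurable (J r) := fun r =>
    measurable_const.indicator (measurableSet_lt measurable_const hτmeas)
  have hJval : ∀ r ω, J r ω = if r < τ ω then 1 else 0 := fun r ω => by
    simp [hJ, Set.indicator_apply]
  -- grid
  set p : ℕ → ℕ → ℝ := fun n i => s + (i : ℝ) * ((t - s) / ((n : ℝ) + 1)) with hpdef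
  have hp0 : ∀ n, p n 0 = s := fun n => by simp [hpdef]
  have hplast : ∀ n, p n (n + 1) = t := fun n => by
    have h : ((n : ℝ) + 1) ≠ 0 := by positivity
    simp only [hpdef]
    field_simp
    push_cast
    ring
  have hts : (0:ℝ) ≤ t - s := by linarith
  have hpmono : ∀ n, ∀ i j : ℕ, i ≤ j → p n i ≤ p n j := fun n i j hij => by
    have h : (0:ℝ) ≤ (t - s) / ((n:ℝ)+1) := by positivity
    simp only [hpdef]
    have := mul_le_mul_of_nonneg_right (Nat.cast_le.2 hij : (i:ℝ) ≤ j) h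
    linarith
  have hpges : ∀ n i, s ≤ p n i := fun n i => by
    have := hpmono n 0 i (Nat.zero_le i)
    rwa [hp0 n] at this
  have hpnn : ∀ n i, 0 ≤ p n i := fun n i => hs.trans (hpges n i)
  have hplet : ∀ n, ∀ i : ℕ, i ≤ n + 1 → p n i ≤ t := fun n i hi => by
    have := hpmono n i (n+1) hi
    rwa [hplast n] at this
  have hpstep : ∀ n i : ℕ, p n (i+1) - p n i = (t - s) / ((n:ℝ)+1) := fun n i => by
    simp only [hpdef]
    push_cast
    ring
  -- target functions
  set T : Ω → ℝ := fun ω => Λ (min t (τ ω)) ω - Λ (min s (τ ω)) ω with hTdef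
  set D : Ω → ℝ := fun ω => Real.exp (-Λ s ω) - Real.exp (-Λ t ω) with hDdef
  set g : ℕ → Ω → ℝ := fun n ω => ∑ i ∈ Finset.range (n+1),
    (Λ (p n (i+1)) ω - Λ (p n i) ω) * J (p n (i+1)) ω with hgdef
  set h : ℕ → Ω → ℝ := fun n ω => ∑ i ∈ Finset.range (n+1),
    (Λ (p n (i+1)) ω - Λ (p n i) ω) * Real.exp (-Λ (p n (i+1)) ω) with hhdef
  -- measurability
  have hgm : ∀ n, Measurable (g n) := by
    intro n
    refine Finset.measurable_sum _ fun i _ => ?_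
    exact ((hΛm _ (hpnn n (i+1))).sub (hΛm _ (hpnn n i))).mul (hJm _)
  have hhm : ∀ n, Measurable (h n) := by
    intro n
    refine Finset.measurable_sum _ fun i _ => ?_
    exact ((hΛm _ (hpnn n (i+1))).sub (hΛm _ (hpnn n i))).mul ((hΛm _ (hpnn n (i+1))).neg.exp)
  have hTm : Measurable T := by
    have h1 := lemC τ hτnn Λ ht hΛ0 (fun u h0 _ => hΛm u h0)
      (fun r _ _ => measurableSet_lt measurable_const hτmeas) hΛcont
    have h2 := lemC τ hτnn Λ hs hΛ0 (fun u h0 _ => hΛm u h0)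
      (fun r _ _ => measurableSet_lt measurable_const hτmeas) hΛcont
    exact h1.measurable.sub h2.measurable
  -- pointwise nonnegativity and bounds
  have hΛd : ∀ n i (ω : Ω), 0 ≤ Λ (p n (i+1)) ω - Λ (p n i) ω := fun n i ω =>
    sub_nonneg.2 (hΛmono ω (hpnn n i) (hpnn n (i+1)) (hpmono n i (i+1) (Nat.le_succ i)))
  have hJnn : ∀ r ω, 0 ≤ J r ω := fun r ω => by rw [hJval]; split_ifs <;> norm_num
  have hJle1 : ∀ r ω, J r ω ≤ 1 := fun r ω => by rw [hJval]; split_ifs <;> norm_num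
  have hgnn : ∀ n ω, 0 ≤ g n ω := fun n ω =>
    Finset.sum_nonneg fun i _ => mul_nonneg (hΛd n i ω) (hJnn _ ω)
  have hEnn : ∀ u (ω : Ω), (0:ℝ) ≤ Real.exp (-Λ u ω) := fun u ω => Real.exp_nonneg _
  have hEle1 : ∀ u : ℝ, 0 ≤ u → ∀ ω, Real.exp (-Λ u ω) ≤ 1 := fun u hu ω => by
    have h1 : Real.exp (-Λ u ω) ≤ Real.exp 0 := Real.exp_le_exp.2 (neg_nonpos.2 (hΛnn u hu ω))
    rwa [Real.exp_zero] at h1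
  have hEmono : ∀ (a b : ℝ), 0 ≤ a → a ≤ b → ∀ ω,
      Real.exp (-Λ b ω) ≤ Real.exp (-Λ a ω) := fun a b ha hab ω =>
    Real.exp_le_exp.2 (neg_le_neg (hΛmono ω ha (ha.trans hab) hab))
  have hDnn : ∀ ω, 0 ≤ D ω := fun ω => sub_nonneg.2 (hEmono s t hs hst ω)
  have hD1 : ∀ ω, D ω ≤ 1 := fun ω => by
    have := hEle1 s hs ω
    have := hEnn t ω
    simp only [hDdef]
    linarith
  have hTnn : ∀ ω, 0 ≤ T ω := fun ω => by
    have h1 : (0:ℝ) ≤ min s (τ ω) := le_min hs (hτnn ω)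
    have h2 : min s (τ ω) ≤ min t (τ ω) := min_le_min hst le_rfl
    exact sub_nonneg.2 (hΛmono ω h1 (h1.trans h2) h2)
  -- termwise exp inequalities
  have hexplow : ∀ (a b : ℝ) (ω : Ω),
      (Λ b ω - Λ a ω) * Real.exp (-Λ b ω) ≤ Real.exp (-Λ a ω) - Real.exp (-Λ b ω) := by
    intro a b ω
    have h1 : ((Λ b ω - Λ a ω) + 1) * Real.exp (-Λ b ω)
        ≤ Real.exp (Λ b ω - Λ a ω) * Real.exp (-Λ b ω) :=
      mul_le_mul_of_nonneg_right (Real.add_one_le_exp _) (Real.exp_nonneg _)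
    have h2 : Real.exp (Λ b ω - Λ a ω) * Real.exp (-Λ b ω) = Real.exp (-Λ a ω) := by
      rw [← Real.exp_add]; congr 1; ring
    nlinarith [Real.exp_nonneg (-Λ b ω)]
  have hexpup : ∀ (a b : ℝ) (ω : Ω),
      Real.exp (-Λ a ω) - Real.exp (-Λ b ω) ≤ (Λ b ω - Λ a ω) * Real.exp (-Λ a ω) := by
    intro a b ω
    have h1 : (-(Λ b ω - Λ a ω) + 1) ≤ Real.exp (-(Λ b ω - Λ a ω)) := Real.add_one_le_exp _
    have h2 : Real.exp (-Λ a ω) * Real.exp (-(Λ b ω - Λ a ω)) = Real.exp (-Λ b ω) := by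
      rw [← Real.exp_add]; congr 1; ring
    nlinarith [Real.exp_nonneg (-Λ a ω)]
  have hhle : ∀ n ω, h n ω ≤ D ω := by
    intro n ω
    have htel : ∑ i ∈ Finset.range (n+1),
        (Real.exp (-Λ (p n i) ω) - Real.exp (-Λ (p n (i+1)) ω))
        = Real.exp (-Λ (p n 0) ω) - Real.exp (-Λ (p n (n+1)) ω) :=
      Finset.sum_range_sub' (fun i => Real.exp (-Λ (p n i) ω)) (n+1)
    have hsum : h n ω ≤ ∑ i ∈ Finset.range (n+1),
        (Real.exp (-Λ (p n i) ω) - Real.exp (-Λ (p n (i+1)) ω)) := by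
      refine Finset.sum_le_sum fun i _ => hexplow (p n i) (p n (i+1)) ω
    rw [htel, hp0 n, hplast n] at hsum
    exact hsum
  have hhnn : ∀ n ω, 0 ≤ h n ω := fun n ω =>
    Finset.sum_nonneg fun i _ => mul_nonneg (hΛd n i ω) (Real.exp_nonneg _)
  have hgle : ∀ n ω, g n ω ≤ T ω := by
    intro n ω
    have htelT : ∑ i ∈ Finset.range (n+1),
        (Λ (min (p n (i+1)) (τ ω)) ω - Λ (min (p n i) (τ ω)) ω) = T ω := by
      rw [Finset.sum_range_sub (fun i => Λ (min (p n i) (τ ω)) ω) (n+1), hp0 n, hplast n]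
    rw [← htelT]
    refine Finset.sum_le_sum fun i _ => ?_
    by_cases hb : p n (i+1) < τ ω
    · have ha : p n i < τ ω := lt_of_le_of_lt (hpmono n i (i+1) (Nat.le_succ i)) hb
      rw [hJval, if_pos hb, mul_one]
      rw [min_eq_left (le_of_lt hb), min_eq_left (le_of_lt ha)]
    · rw [hJval, if_neg hb, mul_zero]
      have h1 : (0:ℝ) ≤ min (p n i) (τ ω) := le_min (hpnn n i) (hτnn ω)
      have h2 : min (p n i) (τ ω) ≤ min (p n (i+1)) (τ ω) :=
        min_le_min (hpmono n i (i+1) (Nat.le_succ i)) le_rfl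
      exact sub_nonneg.2 (hΛmono ω h1 (h1.trans h2) h2)
  -- uniform continuity based convergence
  have hucont : ∀ ω, ∀ ε : ℝ, 0 < ε → ∃ δ' : ℝ, 0 < δ' ∧ ∀ x ∈ Set.Icc s t, ∀ y ∈ Set.Icc s t,
      dist x y ≤ δ' → dist (Λ x ω) (Λ y ω) ≤ ε := by
    intro ω ε hε
    have hc : ContinuousOn (fun u => Λ u ω) (Set.Icc s t) :=
      (hΛcont ω).mono (fun x hx => le_trans hs hx.1)
    have hu := isCompact_Icc.uniformContinuousOn_of_continuous hc
    rw [Metric.uniformContinuousOn_iff_le] at hu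
    obtain ⟨δ', hδ', hud⟩ := hu ε hε
    exact ⟨δ', hδ', fun x hx y hy hxy => hud x hx y hy hxy⟩
  have hgconv : ∀ ω, Tendsto (fun n => g n ω) atTop (𝓝 (T ω)) := by
    intro ω
    rw [Metric.tendsto_atTop]
    intro ε hε
    obtain ⟨δ', hδ', hud⟩ := hucont ω (ε/2) (by positivity)
    obtain ⟨N, hN⟩ := meshSmall hts hδ'
    refine ⟨N, fun n hn => ?_⟩
    have hmesh : (t - s) / ((n:ℝ)+1) ≤ δ' := hN n hn
    have htelT : ∑ i ∈ Finset.range (n+1),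
        (Λ (min (p n (i+1)) (τ ω)) ω - Λ (min (p n i) (τ ω)) ω) = T ω := by
      rw [Finset.sum_range_sub (fun i => Λ (min (p n i) (τ ω)) ω) (n+1), hp0 n, hplast n]
    have hkey : T ω - g n ω = ∑ i ∈ Finset.range (n+1),
        ((Λ (min (p n (i+1)) (τ ω)) ω - Λ (min (p n i) (τ ω)) ω)
          - (Λ (p n (i+1)) ω - Λ (p n i) ω) * J (p n (i+1)) ω) := by
      rw [Finset.sum_sub_distrib, htelT]
    have hterm : ∀ i ∈ Finset.range (n+1),
        (Λ (min (p n (i+1)) (τ ω)) ω - Λ (min (p n i) (τ ω)) ω)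
          - (Λ (p n (i+1)) ω - Λ (p n i) ω) * J (p n (i+1)) ω
        ≤ (ε/2) * (J (p n i) ω - J (p n (i+1)) ω) := by
      intro i hi
      have hi' : i + 1 ≤ n + 1 := Nat.succ_le_succ (Nat.lt_succ_iff.1 (Finset.mem_range.1 hi))
      rw [hJval, hJval]
      by_cases hb : p n (i+1) < τ ω
      · have ha : p n i < τ ω := lt_of_le_of_lt (hpmono n i (i+1) (Nat.le_succ i)) hb
        rw [if_pos hb, if_pos ha, mul_one]
        rw [min_eq_left (le_of_lt hb), min_eq_left (le_of_lt ha)]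
        simp
      · by_cases ha : p n i < τ ω
        · -- p n i < τ ω ≤ p n (i+1)
          rw [if_neg hb, if_pos ha, mul_zero, sub_zero]
          have hτb : τ ω ≤ p n (i+1) := not_lt.1 hb
          rw [min_eq_right hτb, min_eq_left (le_of_lt ha)]
          have hx : τ ω ∈ Set.Icc s t :=
            ⟨(hpges n i).trans (le_of_lt ha), hτb.trans (hplet n (i+1) hi')⟩
          have hy : p n i ∈ Set.Icc s t := ⟨hpges n i, hplet n i (le_trans (Nat.le_succ i) hi')⟩
          have hdxy : dist (τ ω) (p n i) ≤ δ' := by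
            rw [Real.dist_eq, abs_of_nonneg (by linarith)]
            have h1 : τ ω - p n i ≤ p n (i+1) - p n i := by linarith
            rw [hpstep n i] at h1
            exact h1.trans hmesh
          have := hud _ hx _ hy hdxy
          rw [Real.dist_eq] at this
          have := abs_le.1 this
          linarith [this.2]
        · -- τ ω ≤ p n i
          have hτa : τ ω ≤ p n i := not_lt.1 ha
          have hτb : τ ω ≤ p n (i+1) := hτa.trans (hpmono n i (i+1) (Nat.le_succ i))
          rw [if_neg hb, if_neg ha, mul_zero, sub_zero]
          rw [min_eq_right hτb, min_eq_right hτa]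
          simp
    have htermnn : ∀ i ∈ Finset.range (n+1),
        0 ≤ (Λ (min (p n (i+1)) (τ ω)) ω - Λ (min (p n i) (τ ω)) ω)
          - (Λ (p n (i+1)) ω - Λ (p n i) ω) * J (p n (i+1)) ω := by
      intro i hi
      rw [hJval]
      by_cases hb : p n (i+1) < τ ω
      · have ha : p n i < τ ω := lt_of_le_of_lt (hpmono n i (i+1) (Nat.le_succ i)) hb
        rw [if_pos hb, mul_one]
        rw [min_eq_left (le_of_lt hb), min_eq_left (le_of_lt ha)]
        simp
      · rw [if_neg hb, mul_zero, sub_zero]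
        have h1 : (0:ℝ) ≤ min (p n i) (τ ω) := le_min (hpnn n i) (hτnn ω)
        have h2 : min (p n i) (τ ω) ≤ min (p n (i+1)) (τ ω) :=
          min_le_min (hpmono n i (i+1) (Nat.le_succ i)) le_rfl
        exact sub_nonneg.2 (hΛmono ω h1 (h1.trans h2) h2)
    have htelJ : ∑ i ∈ Finset.range (n+1), (J (p n i) ω - J (p n (i+1)) ω)
        = J (p n 0) ω - J (p n (n+1)) ω := Finset.sum_range_sub' (fun i => J (p n i) ω) (n+1)
    have hup : T ω - g n ω ≤ ε/2 := by
      rw [hkey]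
      calc ∑ i ∈ Finset.range (n+1), ((Λ (min (p n (i+1)) (τ ω)) ω - Λ (min (p n i) (τ ω)) ω)
            - (Λ (p n (i+1)) ω - Λ (p n i) ω) * J (p n (i+1)) ω)
          ≤ ∑ i ∈ Finset.range (n+1), (ε/2) * (J (p n i) ω - J (p n (i+1)) ω) :=
            Finset.sum_le_sum hterm
        _ = (ε/2) * (J (p n 0) ω - J (p n (n+1)) ω) := by rw [← Finset.mul_sum, htelJ]
        _ ≤ ε/2 := by
            have h1 := hJnn (p n (n+1)) ω
            have h2 := hJle1 (p n 0) ω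
            nlinarith
    have hlow : 0 ≤ T ω - g n ω := by
      rw [hkey]
      exact Finset.sum_nonneg htermnn
    rw [Real.dist_eq, abs_sub_comm, abs_of_nonneg hlow]
    exact lt_of_le_of_lt hup (half_lt_self hε)
  have hhconv : ∀ ω, Tendsto (fun n => h n ω) atTop (𝓝 (D ω)) := by
    intro ω
    rw [Metric.tendsto_atTop]
    intro ε hε
    obtain ⟨δ', hδ', hud⟩ := hucont ω (ε/2) (by positivity)
    obtain ⟨N, hN⟩ := meshSmall hts hδ'
    refine ⟨N, fun n hn => ?_⟩
    have hmesh : (t - s) / ((n:ℝ)+1) ≤ δ' := hN n hn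
    have htelD : ∑ i ∈ Finset.range (n+1),
        (Real.exp (-Λ (p n i) ω) - Real.exp (-Λ (p n (i+1)) ω))
        = D ω := by
      rw [Finset.sum_range_sub' (fun i => Real.exp (-Λ (p n i) ω)) (n+1), hp0 n, hplast n]
    have hkey : D ω - h n ω = ∑ i ∈ Finset.range (n+1),
        ((Real.exp (-Λ (p n i) ω) - Real.exp (-Λ (p n (i+1)) ω))
          - (Λ (p n (i+1)) ω - Λ (p n i) ω) * Real.exp (-Λ (p n (i+1)) ω)) := by
      rw [Finset.sum_sub_distrib, htelD]
    have hdelta : ∀ i : ℕ, i + 1 ≤ n + 1 → Λ (p n (i+1)) ω - Λ (p n i) ω ≤ ε/2 := by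
      intro i hi'
      have hx : p n (i+1) ∈ Set.Icc s t := ⟨hpges n (i+1), hplet n (i+1) hi'⟩
      have hy : p n i ∈ Set.Icc s t := ⟨hpges n i, hplet n i (le_trans (Nat.le_succ i) hi')⟩
      have hdxy : dist (p n (i+1)) (p n i) ≤ δ' := by
        rw [Real.dist_eq, abs_of_nonneg (by linarith [hpmono n i (i+1) (Nat.le_succ i)])]
        rw [hpstep n i]; exact hmesh
      have := hud _ hx _ hy hdxy
      rw [Real.dist_eq] at this
      linarith [(abs_le.1 this).2]
    have hterm : ∀ i ∈ Finset.range (n+1),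
        (Real.exp (-Λ (p n i) ω) - Real.exp (-Λ (p n (i+1)) ω))
          - (Λ (p n (i+1)) ω - Λ (p n i) ω) * Real.exp (-Λ (p n (i+1)) ω)
        ≤ (ε/2) * (Real.exp (-Λ (p n i) ω) - Real.exp (-Λ (p n (i+1)) ω)) := by
      intro i hi
      have hi' : i + 1 ≤ n + 1 := Nat.succ_le_succ (Nat.lt_succ_iff.1 (Finset.mem_range.1 hi))
      have hEd : 0 ≤ Real.exp (-Λ (p n i) ω) - Real.exp (-Λ (p n (i+1)) ω) :=
        sub_nonneg.2 (hEmono (p n i) (p n (i+1)) (hpnn n i) (hpmono n i (i+1) (Nat.le_succ i)) ω)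
      have h1 := hexpup (p n i) (p n (i+1)) ω
      have h2 := hdelta i hi'
      have h3 := hΛd n i ω
      nlinarith [Real.exp_nonneg (-Λ (p n (i+1)) ω)]
    have htermnn : ∀ i ∈ Finset.range (n+1),
        0 ≤ (Real.exp (-Λ (p n i) ω) - Real.exp (-Λ (p n (i+1)) ω))
          - (Λ (p n (i+1)) ω - Λ (p n i) ω) * Real.exp (-Λ (p n (i+1)) ω) := fun i _ => by
      linarith [hexplow (p n i) (p n (i+1)) ω]
    have htelE : ∑ i ∈ Finset.range (n+1),
        (Real.exp (-Λ (p n i) ω) - Real.exp (-Λ (p n (i+1)) ω)) = D ω := htelD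
    have hup : D ω - h n ω ≤ ε/2 := by
      rw [hkey]
      calc ∑ i ∈ Finset.range (n+1), ((Real.exp (-Λ (p n i) ω) - Real.exp (-Λ (p n (i+1)) ω))
            - (Λ (p n (i+1)) ω - Λ (p n i) ω) * Real.exp (-Λ (p n (i+1)) ω))
          ≤ ∑ i ∈ Finset.range (n+1),
            (ε/2) * (Real.exp (-Λ (p n i) ω) - Real.exp (-Λ (p n (i+1)) ω)) :=
            Finset.sum_le_sum hterm
        _ = (ε/2) * D ω := by rw [← Finset.mul_sum, htelE]
        _ ≤ ε/2 := by
            have hh := mul_le_mul_of_nonneg_left (hD1 ω) (le_of_lt (half_pos hε))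
            linarith
    have hlow : 0 ≤ D ω - h n ω := by
      rw [hkey]
      exact Finset.sum_nonneg htermnn
    rw [Real.dist_eq, abs_sub_comm, abs_of_nonneg hlow]
    exact lt_of_le_of_lt hup (half_lt_self hε)
  -- per-term lintegral identity
  have hTermEq : ∀ (B : Set Ω), MeasurableSet[𝔉 s] B → ∀ a b : ℝ, 0 ≤ a → a ≤ b → s ≤ b →
      ∫⁻ ω in B, ENNReal.ofReal ((Λ b ω - Λ a ω) * J b ω) ∂μ
        = ∫⁻ ω in B, ENNReal.ofReal ((Λ b ω - Λ a ω) * Real.exp (-Λ b ω)) ∂μ := by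
    intro B hB a b ha hab hsb
    have hb : 0 ≤ b := hs.trans hsb
    have hBm : MeasurableSet B := 𝔉.le s _ hB
    have hXnn : ∀ ω, 0 ≤ B.indicator (fun ω' => Λ b ω' - Λ a ω') ω := fun ω =>
      Set.indicator_nonneg (fun ω' _ => sub_nonneg.2 (hΛmono ω' ha hb hab)) ω
    have hX : Measurable[𝔉 b] (B.indicator (fun ω' => Λ b ω' - Λ a ω')) :=
      Measurable.indicator ((hΛadapted b hb).sub ((hΛadapted a ha).mono (𝔉.mono hab) le_rfl))
        (𝔉.mono hsb _ hB)
    have hlem := lemA μ (𝔉.le b) hX hXnn (measurableSet_lt measurable_const hτmeas)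
      ((hΛm b hb).neg.exp) (fun ω => Real.exp_nonneg _) (fun ω => hEle1 b hb ω) (hsurv b hb)
    have conv1 : ∀ ψ : Ω → ℝ,
        ∫⁻ ω, ENNReal.ofReal (B.indicator (fun ω' => Λ b ω' - Λ a ω') ω * ψ ω) ∂μ
          = ∫⁻ ω in B, ENNReal.ofReal ((Λ b ω - Λ a ω) * ψ ω) ∂μ := by
      intro ψ
      rw [← lintegral_indicator hBm]
      refine lintegral_congr fun ω => ?_
      by_cases hω : ω ∈ B
      · rw [Set.indicator_of_mem hω, Set.indicator_of_mem hω]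
      · rw [Set.indicator_of_notMem hω, Set.indicator_of_notMem hω, zero_mul,
          ENNReal.ofReal_zero]
    rw [← conv1 (J b), ← conv1 (fun ω => Real.exp (-Λ b ω))]
    exact hlem
  -- sum-level identity
  have hgEq : ∀ (B : Set Ω), MeasurableSet[𝔉 s] B → ∀ n : ℕ,
      ∫⁻ ω in B, ENNReal.ofReal (g n ω) ∂μ = ∫⁻ ω in B, ENNReal.ofReal (h n ω) ∂μ := by
    intro B hB n
    have e1 : (fun ω => ENNReal.ofReal (g n ω)) = fun ω => ∑ i ∈ Finset.range (n+1),
        ENNReal.ofReal ((Λ (p n (i+1)) ω - Λ (p n i) ω) * J (p n (i+1)) ω) := by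
      funext ω
      exact ENNReal.ofReal_sum_of_nonneg fun i _ => mul_nonneg (hΛd n i ω) (hJnn _ ω)
    have e2 : (fun ω => ENNReal.ofReal (h n ω)) = fun ω => ∑ i ∈ Finset.range (n+1),
        ENNReal.ofReal ((Λ (p n (i+1)) ω - Λ (p n i) ω) * Real.exp (-Λ (p n (i+1)) ω)) := by
      funext ω
      exact ENNReal.ofReal_sum_of_nonneg fun i _ => mul_nonneg (hΛd n i ω) (Real.exp_nonneg _)
    rw [e1, e2, lintegral_finset_sum _ (f := fun i ω =>
        ENNReal.ofReal ((Λ (p n (i+1)) ω - Λ (p n i) ω) * J (p n (i+1)) ω)) (fun i _ =>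
        (((hΛm _ (hpnn n (i+1))).sub (hΛm _ (hpnn n i))).mul (hJm _)).ennreal_ofReal),
      lintegral_finset_sum _ (f := fun i ω =>
        ENNReal.ofReal ((Λ (p n (i+1)) ω - Λ (p n i) ω) * Real.exp (-Λ (p n (i+1)) ω))) (fun i _ =>
        (((hΛm _ (hpnn n (i+1))).sub (hΛm _ (hpnn n i))).mul
          ((hΛm _ (hpnn n (i+1))).neg.exp)).ennreal_ofReal)]
    refine Finset.sum_congr rfl fun i hi => ?_
    have hi' : i + 1 ≤ n + 1 := Nat.succ_le_succ (Nat.lt_succ_iff.1 (Finset.mem_range.1 hi))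
    exact hTermEq B hB (p n i) (p n (i+1)) (hpnn n i) (hpmono n i (i+1) (Nat.le_succ i))
      (hpges n (i+1))
  -- finiteness of the T-integral
  have hhint_le : ∀ n : ℕ, ∫⁻ ω, ENNReal.ofReal (h n ω) ∂μ ≤ 1 := by
    intro n
    calc ∫⁻ ω, ENNReal.ofReal (h n ω) ∂μ ≤ ∫⁻ _, 1 ∂μ := by
          refine lintegral_mono fun ω => ?_
          rw [show (1 : ℝ≥0∞) = ENNReal.ofReal 1 by simp]
          exact ENNReal.ofReal_le_ofReal ((hhle n ω).trans (hD1 ω))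
      _ = 1 := by simp
  have hTfin : ∫⁻ ω, ENNReal.ofReal (T ω) ∂μ ≤ 1 := by
    have hliminf : ∫⁻ ω, ENNReal.ofReal (T ω) ∂μ
        ≤ liminf (fun n => ∫⁻ ω, ENNReal.ofReal (g n ω) ∂μ) atTop := by
      have hfatou := lintegral_liminf_le (fun n => (hgm n).ennreal_ofReal) (μ := μ) (u := atTop)
      refine le_trans (le_of_eq (lintegral_congr fun ω => ?_)) hfatou
      exact (Tendsto.liminf_eq ((ENNReal.continuous_ofReal.tendsto _).comp (hgconv ω))).symm
    have huniv : ∀ n : ℕ, ∫⁻ ω, ENNReal.ofReal (g n ω) ∂μ = ∫⁻ ω, ENNReal.ofReal (h n ω) ∂μ := by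
      intro n
      have := hgEq Set.univ MeasurableSet.univ n
      rwa [Measure.restrict_univ] at this
    simp only [huniv] at hliminf
    refine hliminf.trans ?_
    exact liminf_le_of_frequently_le (Frequently.of_forall hhint_le)
  -- final step : dominated convergence
  intro B hB
  have hBm : MeasurableSet B := 𝔉.le s _ hB
  have hglim : Tendsto (fun n => ∫⁻ ω in B, ENNReal.ofReal (g n ω) ∂μ) atTop
      (𝓝 (∫⁻ ω in B, ENNReal.ofReal (T ω) ∂μ)) := by
    refine tendsto_lintegral_of_dominated_convergence (fun ω => ENNReal.ofReal (T ω))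
      (fun n => (hgm n).ennreal_ofReal) (fun n => ae_of_all _ fun ω =>
        ENNReal.ofReal_le_ofReal (hgle n ω)) ?_ (ae_of_all _ fun ω =>
        (ENNReal.continuous_ofReal.tendsto _).comp (hgconv ω))
    refine ne_of_lt (lt_of_le_of_lt ((setLIntegral_le_lintegral _ _).trans hTfin) ?_)
    exact ENNReal.one_lt_top
  have hhlim : Tendsto (fun n => ∫⁻ ω in B, ENNReal.ofReal (h n ω) ∂μ) atTop
      (𝓝 (∫⁻ ω in B, ENNReal.ofReal (D ω) ∂μ)) := by
    refine tendsto_lintegral_of_dominated_convergence (fun _ => 1)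
      (fun n => (hhm n).ennreal_ofReal) (fun n => ae_of_all _ fun ω => ?_) ?_
      (ae_of_all _ fun ω => (ENNReal.continuous_ofReal.tendsto _).comp (hhconv ω))
    · rw [show (1 : ℝ≥0∞) = ENNReal.ofReal 1 by simp]
      exact ENNReal.ofReal_le_ofReal ((hhle n ω).trans (hD1 ω))
    · rw [lintegral_one]
      exact ne_of_lt (lt_of_le_of_lt (le_of_eq (Measure.restrict_apply_univ _)) (measure_lt_top μ B))
  have hBeq := hgEq B hB
  simp only [hBeq] at hglim
  exact tendsto_nhds_unique hglim hhlim

/-- In the hazard-process setup, for every `t ≥ 0` the random variable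
`Λ_{t∧τ}` is integrable, and `M_t = 1_{τ ≤ t} − Λ_{t∧τ}` is a martingale with respect to
the enlarged filtration `ℱ_t = 𝔉̂_t ⊔ σ({τ > r} : r ∈ [0,t])` (adaptedness, integrability
and the conditional-expectation property). -/
theorem stmt7 {Ω : Type*} {m𝔉 : MeasurableSpace Ω} (μ : Measure Ω) [IsProbabilityMeasure μ]
    (𝔉 : MeasureTheory.Filtration ℝ m𝔉)
    (τ : Ω → ℝ) (hτmeas : Measurable τ) (hτnn : ∀ ω, 0 ≤ τ ω)
    (Λ : ℝ → Ω → ℝ)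
    (hΛadapted : ∀ t : ℝ, 0 ≤ t → Measurable[𝔉 t] (Λ t))
    (hΛ0 : ∀ ω, Λ 0 ω = 0)
    (hΛnn : ∀ t : ℝ, 0 ≤ t → ∀ ω, 0 ≤ Λ t ω)
    (hΛmono : ∀ ω, MonotoneOn (fun t => Λ t ω) (Set.Ici 0))
    (hΛcont : ∀ ω, ContinuousOn (fun t => Λ t ω) (Set.Ici 0))
    (hΛtop : ∀ᵐ ω ∂μ, Filter.Tendsto (fun t => Λ t ω) Filter.atTop Filter.atTop)
    (hsurv : ∀ t : ℝ, 0 ≤ t →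
      μ[Set.indicator {ω | t < τ ω} (fun _ => (1 : ℝ)) | 𝔉 t]
        =ᵐ[μ] fun ω => Real.exp (-Λ t ω))
    (ℱ : ℝ → MeasurableSpace Ω)
    (hℱ : ∀ s : ℝ, ℱ s = 𝔉 s ⊔ MeasurableSpace.generateFrom
        {A | ∃ r : ℝ, 0 ≤ r ∧ r ≤ s ∧ A = {ω | r < τ ω}})
    (M : ℝ → Ω → ℝ)
    (hM : ∀ t ω, M t ω
      = Set.indicator {ω' | τ ω' ≤ t} (fun _ => (1 : ℝ)) ω - Λ (min t (τ ω)) ω) :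
    (∀ t : ℝ, 0 ≤ t → Integrable (fun ω => Λ (min t (τ ω)) ω) μ) ∧
    (∀ t : ℝ, 0 ≤ t → StronglyMeasurable[ℱ t] (M t)) ∧
    (∀ t : ℝ, 0 ≤ t → Integrable (M t) μ) ∧
    (∀ s t : ℝ, 0 ≤ s → s ≤ t → μ[M t | ℱ s] =ᵐ[μ] M s) := by
  classical
  have hΛm : ∀ u : ℝ, 0 ≤ u → Measurable (Λ u) := fun u hu =>
    (hΛadapted u hu).mono (𝔉.le u) le_rfl
  have hτset : ∀ r : ℝ, MeasurableSet {ω | r < τ ω} := fun r =>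
    measurableSet_lt measurable_const hτmeas
  have hℱle : ∀ u : ℝ, ℱ u ≤ m𝔉 := by
    intro u
    rw [hℱ u]
    refine sup_le (𝔉.le u) (MeasurableSpace.generateFrom_le ?_)
    rintro A ⟨r, _, _, rfl⟩
    exact hτset r
  have h𝔉F : ∀ u : ℝ, 𝔉 u ≤ ℱ u := fun u => by rw [hℱ u]; exact le_sup_left
  have hgenF : ∀ u r : ℝ, 0 ≤ r → r ≤ u → MeasurableSet[ℱ u] {ω | r < τ ω} := by
    intro u r h0 h1
    rw [hℱ u]
    exact (le_sup_right
      (a := 𝔉 u) (b := MeasurableSpace.generateFrom {A | ∃ r : ℝ, 0 ≤ r ∧ r ≤ u ∧ A = {ω | r < τ ω}}))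
      _ (MeasurableSpace.measurableSet_generateFrom ⟨r, h0, h1, rfl⟩)
  have hLminSM : ∀ t : ℝ, 0 ≤ t → StronglyMeasurable[m𝔉] (fun ω => Λ (min t (τ ω)) ω) :=
    fun t ht => lemC τ hτnn Λ ht hΛ0 (fun u h0 _ => hΛm u h0) (fun r _ _ => hτset r) hΛcont
  have hLminF : ∀ t : ℝ, 0 ≤ t → StronglyMeasurable[ℱ t] (fun ω => Λ (min t (τ ω)) ω) := by
    intro t ht
    refine lemC τ hτnn Λ ht hΛ0 (fun u h0 h1 => ?_) (fun r h0 h1 => hgenF t r h0 h1) hΛcont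
    exact (hΛadapted u h0).mono ((𝔉.mono h1).trans (h𝔉F t)) le_rfl
  have hmin0 : ∀ ω, min (0:ℝ) (τ ω) = 0 := fun ω => min_eq_left (hτnn ω)
  -- integrability of Λ (min t τ)
  have hint : ∀ t : ℝ, 0 ≤ t → Integrable (fun ω => Λ (min t (τ ω)) ω) μ := by
    intro t ht
    have hkey := lemB μ 𝔉 τ hτmeas hτnn Λ hΛadapted hΛ0 hΛnn hΛmono hΛcont hsurv
      (le_refl (0:ℝ)) ht Set.univ MeasurableSet.univ
    rw [Measure.restrict_univ] at hkey
    refine ⟨(hLminSM t ht).aestronglyMeasurable, ?_⟩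
    rw [hasFiniteIntegral_iff_ofReal (ae_of_all _ fun ω => hΛnn _ (le_min ht (hτnn ω)) ω)]
    have e1 : (fun ω => ENNReal.ofReal (Λ (min t (τ ω)) ω))
        = fun ω => ENNReal.ofReal (Λ (min t (τ ω)) ω - Λ (min 0 (τ ω)) ω) := by
      funext ω
      rw [hmin0 ω, hΛ0 ω, sub_zero]
    rw [e1, hkey]
    refine lt_of_le_of_lt (le_trans (lintegral_mono fun ω => ?_) (le_of_eq lintegral_one)) ?_
    · exact ENNReal.ofReal_le_one.2 (by
        have h1 : Real.exp (-Λ 0 ω) = 1 := by rw [hΛ0 ω, neg_zero, Real.exp_zero]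
        have h2 : (0:ℝ) ≤ Real.exp (-Λ t ω) := Real.exp_nonneg _
        linarith)
    · rw [measure_univ]; exact ENNReal.one_lt_top
  -- adaptedness
  have hadapt : ∀ t : ℝ, 0 ≤ t → StronglyMeasurable[ℱ t] (M t) := by
    intro t ht
    have hMfun : M t = fun ω =>
        Set.indicator {ω' | τ ω' ≤ t} (fun _ => (1:ℝ)) ω - Λ (min t (τ ω)) ω :=
      funext fun ω => hM t ω
    rw [hMfun]
    have hsetc : MeasurableSet[ℱ t] {ω' | τ ω' ≤ t} := by
      have e : {ω' | τ ω' ≤ t} = {ω' | t < τ ω'}ᶜ := by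
        ext ω; simp [not_lt]
      rw [e]
      exact (hgenF t t ht le_rfl).compl
    exact (((stronglyMeasurable_const : StronglyMeasurable[ℱ t] fun _ => (1:ℝ))).indicator hsetc).sub (hLminF t ht)
  -- integrability of M t
  have hMint : ∀ t : ℝ, 0 ≤ t → Integrable (M t) μ := by
    intro t ht
    have hMfun : M t = fun ω =>
        Set.indicator {ω' | τ ω' ≤ t} (fun _ => (1:ℝ)) ω - Λ (min t (τ ω)) ω :=
      funext fun ω => hM t ω
    rw [hMfun]
    exact Integrable.sub ((integrable_const 1).indicator
      (measurableSet_le hτmeas measurable_const)) (hint t ht)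
  refine ⟨hint, hadapt, hMint, ?_⟩
  -- martingale property
  intro s t hs hst
  have ht : 0 ≤ t := hs.trans hst
  haveI : SigmaFinite (μ.trim (hℱle s)) := inferInstance
  -- conditional survival in set-integral form
  have hsurvInt : ∀ u : ℝ, 0 ≤ u → s ≤ u → ∀ B : Set Ω, MeasurableSet[𝔉 s] B →
      ∫ ω in B, Set.indicator {ω' | u < τ ω'} (fun _ => (1:ℝ)) ω ∂μ
        = ∫ ω in B, Real.exp (-Λ u ω) ∂μ := by
    intro u hu hsu B hB
    have hBu : MeasurableSet[𝔉 u] B := 𝔉.mono hsu _ hB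
    haveI : SigmaFinite (μ.trim (𝔉.le u)) := inferInstance
    have h1 := setIntegral_condExp (μ := μ) (𝔉.le u)
      ((integrable_const (1:ℝ)).indicator (hτset u)) hBu
    rw [← h1]
    exact integral_congr_ae (ae_restrict_of_ae (hsurv u hu))
  have hEint : ∀ u : ℝ, 0 ≤ u → Integrable (fun ω => Real.exp (-Λ u ω)) μ := by
    intro u hu
    refine Integrable.mono' (integrable_const (1:ℝ))
      ((hΛm u hu).neg.exp).aestronglyMeasurable (ae_of_all _ fun ω => ?_)
    rw [Real.norm_eq_abs, abs_of_nonneg (Real.exp_nonneg _)]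
    have h1 : Real.exp (-Λ u ω) ≤ Real.exp 0 := Real.exp_le_exp.2 (neg_nonpos.2 (hΛnn u hu ω))
    rwa [Real.exp_zero] at h1
  -- the core computation for B in 𝔉 s
  have hbaseB : ∀ B : Set Ω, MeasurableSet[𝔉 s] B →
      ∫ ω in B, M s ω ∂μ = ∫ ω in B, M t ω ∂μ := by
    intro B hB
    have hBm : MeasurableSet B := 𝔉.le s _ hB
    have hIs := hsurvInt s hs le_rfl B hB
    have hIt := hsurvInt t ht hst B hB
    have hTkey := lemB μ 𝔉 τ hτmeas hτnn Λ hΛadapted hΛ0 hΛnn hΛmono hΛcont hsurv hs hst B hB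
    have hTint : Integrable (fun ω => Λ (min t (τ ω)) ω - Λ (min s (τ ω)) ω) μ :=
      (hint t ht).sub (hint s hs)
    have hDint : Integrable (fun ω => Real.exp (-Λ s ω) - Real.exp (-Λ t ω)) μ :=
      (hEint s hs).sub (hEint t ht)
    have hTnn : ∀ ω, 0 ≤ Λ (min t (τ ω)) ω - Λ (min s (τ ω)) ω := by
      intro ω
      have h1 : (0:ℝ) ≤ min s (τ ω) := le_min hs (hτnn ω)
      have h2 : min s (τ ω) ≤ min t (τ ω) := min_le_min hst le_rfl
      exact sub_nonneg.2 (hΛmono ω h1 (h1.trans h2) h2)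
    have hDnn : ∀ ω, 0 ≤ Real.exp (-Λ s ω) - Real.exp (-Λ t ω) := fun ω =>
      sub_nonneg.2 (Real.exp_le_exp.2 (neg_le_neg (hΛmono ω hs ht hst)))
    -- Λ-part in Bochner form
    have hTD : ∫ ω in B, (Λ (min t (τ ω)) ω - Λ (min s (τ ω)) ω) ∂μ
        = ∫ ω in B, (Real.exp (-Λ s ω) - Real.exp (-Λ t ω)) ∂μ := by
      rw [integral_eq_lintegral_of_nonneg_ae (ae_of_all _ hTnn)
          (hTint.aestronglyMeasurable.restrict),
        integral_eq_lintegral_of_nonneg_ae (ae_of_all _ hDnn)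
          (hDint.aestronglyMeasurable.restrict), hTkey]
    -- pointwise decomposition of M t - M s
    have hMdiff : ∀ ω, M t ω - M s ω
        = (Set.indicator {ω' | s < τ ω'} (fun _ => (1:ℝ)) ω
            - Set.indicator {ω' | t < τ ω'} (fun _ => (1:ℝ)) ω)
          - (Λ (min t (τ ω)) ω - Λ (min s (τ ω)) ω) := by
      intro ω
      rw [hM t ω, hM s ω]
      simp only [Set.indicator_apply, Set.mem_setOf_eq]
      split_ifs <;> linarith
    have hJsint : Integrable (Set.indicator {ω' | s < τ ω'} (fun _ => (1:ℝ))) μ :=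
      (integrable_const 1).indicator (hτset s)
    have hJtint : Integrable (Set.indicator {ω' | t < τ ω'} (fun _ => (1:ℝ))) μ :=
      (integrable_const 1).indicator (hτset t)
    have h5 : ∫ ω in B, (M t ω - M s ω) ∂μ = 0 := by
      have e0 : (fun ω => M t ω - M s ω) = fun ω =>
          (Set.indicator {ω' | s < τ ω'} (fun _ => (1:ℝ)) ω
            - Set.indicator {ω' | t < τ ω'} (fun _ => (1:ℝ)) ω)
          - (Λ (min t (τ ω)) ω - Λ (min s (τ ω)) ω) := funext hMdiff
      have hJdiff : Integrable (fun ω =>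
          Set.indicator {ω' | s < τ ω'} (fun _ => (1:ℝ)) ω
            - Set.indicator {ω' | t < τ ω'} (fun _ => (1:ℝ)) ω) μ := hJsint.sub hJtint
      rw [e0, integral_sub hJdiff.integrableOn hTint.integrableOn,
        integral_sub hJsint.integrableOn hJtint.integrableOn, hIs, hIt, hTD,
        ← integral_sub (hEint s hs).integrableOn (hEint t ht).integrableOn]
      ring
    have h6 : ∫ ω in B, (M t ω - M s ω) ∂μ
        = ∫ ω in B, M t ω ∂μ - ∫ ω in B, M s ω ∂μ :=
      integral_sub (hMint t ht).integrableOn (hMint s hs).integrableOn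
    rw [h5] at h6
    linarith [h6]
  -- the π-system
  have hCpi : IsPiSystem {A : Set Ω | ∃ B : Set Ω, MeasurableSet[𝔉 s] B ∧
      (A = B ∨ ∃ r : ℝ, 0 ≤ r ∧ r ≤ s ∧ A = B ∩ {ω | r < τ ω})} := by
    rintro A1 ⟨B1, hB1, hA1⟩ A2 ⟨B2, hB2, hA2⟩ _
    rcases hA1 with rfl | ⟨r1, hr10, hr1s, rfl⟩
    · rcases hA2 with rfl | ⟨r2, hr20, hr2s, rfl⟩
      · exact ⟨A1 ∩ A2, hB1.inter hB2, Or.inl rfl⟩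
      · exact ⟨A1 ∩ B2, hB1.inter hB2, Or.inr ⟨r2, hr20, hr2s, by rw [Set.inter_assoc]⟩⟩
    · rcases hA2 with rfl | ⟨r2, hr20, hr2s, rfl⟩
      · exact ⟨B1 ∩ A2, hB1.inter hB2, Or.inr ⟨r1, hr10, hr1s, Set.inter_right_comm B1 _ A2⟩⟩
      · refine ⟨B1 ∩ B2, hB1.inter hB2,
          Or.inr ⟨max r1 r2, le_trans hr10 (le_max_left _ _), max_le hr1s hr2s, ?_⟩⟩
        ext ω
        simp only [Set.mem_inter_iff, Set.mem_setOf_eq, max_lt_iff]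
        tauto
  have hgen : ℱ s = MeasurableSpace.generateFrom {A : Set Ω | ∃ B : Set Ω, MeasurableSet[𝔉 s] B ∧
      (A = B ∨ ∃ r : ℝ, 0 ≤ r ∧ r ≤ s ∧ A = B ∩ {ω | r < τ ω})} := by
    rw [hℱ s]
    apply le_antisymm
    · refine sup_le ?_ (MeasurableSpace.generateFrom_le ?_)
      · intro A hA
        exact MeasurableSpace.measurableSet_generateFrom ⟨A, hA, Or.inl rfl⟩
      · rintro A ⟨r, hr0, hrs, rfl⟩
        exact MeasurableSpace.measurableSet_generateFrom
          ⟨Set.univ, MeasurableSet.univ, Or.inr ⟨r, hr0, hrs, (Set.univ_inter _).symm⟩⟩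
    · refine MeasurableSpace.generateFrom_le ?_
      rintro A ⟨B, hB, hA⟩
      have hBF : MeasurableSet[𝔉 s ⊔ MeasurableSpace.generateFrom
          {A | ∃ r : ℝ, 0 ≤ r ∧ r ≤ s ∧ A = {ω | r < τ ω}}] B :=
        (le_sup_left (a := 𝔉 s)) _ hB
      rcases hA with rfl | ⟨r, hr0, hrs, rfl⟩
      · exact hBF
      · refine hBF.inter ((le_sup_right (a := 𝔉 s)) _ ?_)
        exact MeasurableSpace.measurableSet_generateFrom ⟨r, hr0, hrs, rfl⟩
  -- base case on the π-system
  have hbase : ∀ A ∈ {A : Set Ω | ∃ B : Set Ω, MeasurableSet[𝔉 s] B ∧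
      (A = B ∨ ∃ r : ℝ, 0 ≤ r ∧ r ≤ s ∧ A = B ∩ {ω | r < τ ω})}, ∫ ω in A, M s ω ∂μ = ∫ ω in A, M t ω ∂μ := by
    rintro A ⟨B, hB, hA⟩
    rcases hA with rfl | ⟨r, hr0, hrs, rfl⟩
    · exact hbaseB _ hB
    · have hBm : MeasurableSet B := 𝔉.le s _ hB
      have hABm : MeasurableSet (B ∩ {ω | r < τ ω}) := hBm.inter (hτset r)
      have hval : ∀ ω, (B ∩ {ω' | r < τ ω'}).indicator (fun ω' => M t ω' - M s ω') ω
          = B.indicator (fun ω' => M t ω' - M s ω') ω := by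
        intro ω
        by_cases hωB : ω ∈ B
        · by_cases hωr : r < τ ω
          · rw [Set.indicator_of_mem (Set.mem_inter hωB hωr), Set.indicator_of_mem hωB]
          · rw [Set.indicator_of_notMem (fun hc => hωr hc.2), Set.indicator_of_mem hωB]
            have hτs : τ ω ≤ s := (not_lt.1 hωr).trans hrs
            have hτt : τ ω ≤ t := hτs.trans hst
            rw [hM t ω, hM s ω,
              Set.indicator_of_mem (show ω ∈ {ω' | τ ω' ≤ t} from hτt),
              Set.indicator_of_mem (show ω ∈ {ω' | τ ω' ≤ s} from hτs),
              min_eq_right hτt, min_eq_right hτs]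
            ring
        · rw [Set.indicator_of_notMem (fun hc => hωB hc.1), Set.indicator_of_notMem hωB]
      have e1 : ∫ ω in B ∩ {ω' | r < τ ω'}, (M t ω - M s ω) ∂μ
          = ∫ ω in B, (M t ω - M s ω) ∂μ := by
        rw [← integral_indicator hABm, ← integral_indicator hBm]
        exact integral_congr_ae (ae_of_all _ hval)
      have e2 : ∫ ω in B, (M t ω - M s ω) ∂μ = 0 := by
        rw [integral_sub (hMint t ht).integrableOn (hMint s hs).integrableOn]
        have := hbaseB B hB
        linarith
      have e3 : ∫ ω in B ∩ {ω' | r < τ ω'}, (M t ω - M s ω) ∂μ = 0 := e1.trans e2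
      rw [integral_sub (hMint t ht).integrableOn (hMint s hs).integrableOn] at e3
      linarith
  -- extension to the generated σ-algebra
  have htotal : ∫ ω, M s ω ∂μ = ∫ ω, M t ω ∂μ := by
    have := hbaseB Set.univ MeasurableSet.univ
    rwa [Measure.restrict_univ] at this
  have hall : ∀ A : Set Ω, MeasurableSet[ℱ s] A →
      ∫ ω in A, M s ω ∂μ = ∫ ω in A, M t ω ∂μ := by
    intro A hA
    refine MeasurableSpace.induction_on_inter
      (C := fun A _ => ∫ ω in A, M s ω ∂μ = ∫ ω in A, M t ω ∂μ)
      (m := ℱ s) hgen hCpi (by simp) hbase ?_ ?_ A hA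
    · intro A hAm hAeq
      have hAm' : MeasurableSet A := hℱle s _ hAm
      have h1 := integral_add_compl hAm' (hMint s hs)
      have h2 := integral_add_compl hAm' (hMint t ht)
      linarith
    · intro f hdisj hfm hfeq
      have hfm' : ∀ i, MeasurableSet (f i) := fun i => hℱle s _ (hfm i)
      rw [integral_iUnion hfm' hdisj (hMint s hs).integrableOn,
        integral_iUnion hfm' hdisj (hMint t ht).integrableOn]
      exact tsum_congr hfeq
  exact (ae_eq_condExp_of_forall_setIntegral_eq (hℱle s) (hMint t ht)
    (fun A _ _ => (hMint s hs).integrableOn)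
    (fun A hA _ => hall A hA)
    ((hadapt s hs).aestronglyMeasurable)).symm
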